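/- There exists a constant C > 0 such that |χ♯(R,u)| ≤ C·e^{(R+|R|)/2}·(1 + |R|)^{−1/2} for all (R,u) ∈ ℝ². In particular, sup_{u∈ℝ} |χ♯(R,u)| → 0 as R → −∞. -/

import Mathlib

open MeasureTheory Filter


lemma natKey (n : ℕ) : (n+1) * (Nat.factorial (2*n))^2 ≤ 16^n * (Nat.factorial n)^4 := by
  induction n with
  | zero => simp
  | succ n ih =>
    have h2 : 2 * (n+1) = (2*n+1) + 1 := by ring
    rw [h2, Nat.factorial_succ, Nat.factorial_succ, Nat.factorial_succ]
    have key : (n+2)*(2*n+1+1)^2*(2*n+1)^2 ≤ 16*(n+1)^4*(n+1) := by nlinarith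
    calc (n+1+1) * ((2*n+1+1) * ((2*n+1) * Nat.factorial (2*n)))^2
        = ((n+2)*(2*n+1+1)^2*(2*n+1)^2) * (Nat.factorial (2*n))^2 := by ring
      _ ≤ (16*(n+1)^4*(n+1)) * (Nat.factorial (2*n))^2 :=
          Nat.mul_le_mul_right _ key
      _ = (16*(n+1)^4) * ((n+1) * (Nat.factorial (2*n))^2) := by ring
      _ ≤ (16*(n+1)^4) * (16^n * (Nat.factorial n)^4) := Nat.mul_le_mul_left _ ih
      _ = 16^(n+1) * ((n+1) * Nat.factorial n)^4 := by ring

lemma realKey (n : ℕ) :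
    Real.sqrt (n+1) * (Nat.factorial (2*n) : ℝ) ≤ 4^n * (Nat.factorial n : ℝ)^2 := by
  have h' : ((n:ℝ)+1) * ((Nat.factorial (2*n) : ℝ))^2 ≤ (4^n * (Nat.factorial n : ℝ)^2)^2 := by
    have h : ((n+1) * (Nat.factorial (2*n))^2 : ℕ) ≤ ((4^n * (Nat.factorial n)^2)^2 : ℕ) := by
      calc (n+1) * (Nat.factorial (2*n))^2 ≤ 16^n * (Nat.factorial n)^4 := natKey n
        _ = (4^n * (Nat.factorial n)^2)^2 := by
            rw [show (16:ℕ) = 4^2 by norm_num, ← pow_mul, mul_comm 2 n, pow_mul]; ring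
    exact_mod_cast h
  have h0 : (0:ℝ) ≤ 4^n * (Nat.factorial n : ℝ)^2 := by positivity
  calc Real.sqrt (n+1) * (Nat.factorial (2*n) : ℝ)
      = Real.sqrt (((n:ℝ)+1) * ((Nat.factorial (2*n) : ℝ))^2) := by
        rw [Real.sqrt_mul (by positivity), Real.sqrt_sq (by positivity)]
    _ ≤ Real.sqrt ((4^n * (Nat.factorial n : ℝ)^2)^2) := Real.sqrt_le_sqrt h'
    _ = 4^n * (Nat.factorial n : ℝ)^2 := Real.sqrt_sq h0

lemma fact_one_le (n : ℕ) : (1:ℝ) ≤ (Nat.factorial n : ℝ) :=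
  Nat.one_le_cast.2 (Nat.factorial_pos n)

lemma sumF (t : ℝ) (ht : 0 ≤ t) :
    Summable (fun n : ℕ => t^n / (16^n * (Nat.factorial n : ℝ)^2)) := by
  refine Summable.of_nonneg_of_le (f := fun n => t^n / (Nat.factorial n : ℝ))
    (fun n => by positivity) (fun n => ?_) (Real.summable_pow_div_factorial t)
  apply div_le_div_of_nonneg_left (by positivity) (by positivity)
  nlinarith [fact_one_le n, one_le_pow₀ (show (1:ℝ) ≤ 16 by norm_num) (n := n)]

lemma sumE (x : ℝ) (hx : 0 ≤ x) :
    Summable (fun n : ℕ => x^(2*n) / (Nat.factorial (2*n) : ℝ)) := by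
  refine Summable.of_nonneg_of_le (f := fun n => (x^2)^n / (Nat.factorial n : ℝ))
    (fun n => by positivity) (fun n => ?_) (Real.summable_pow_div_factorial _)
  rw [pow_mul]
  apply div_le_div_of_nonneg_left (by positivity) (by positivity)
  exact_mod_cast Nat.factorial_le (by omega)

lemma tsumE (x : ℝ) (hx : 0 ≤ x) :
    ∑' n : ℕ, x^(2*n) / (Nat.factorial (2*n) : ℝ) ≤ Real.exp x := by
  rw [Real.exp_eq_exp_ℝ, NormedSpace.exp_eq_tsum_div]
  apply Summable.tsum_le_tsum_of_inj (fun n => 2*n)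
  · intro a b h; dsimp at h; omega
  · intro c _; positivity
  · intro n; exact le_refl _
  · exact sumE x hx
  · exact Real.summable_pow_div_factorial x



lemma sqrt_exp (t : ℝ) : Real.sqrt (Real.exp t) = Real.exp (t/2) := by
  rw [show Real.exp t = (Real.exp (t/2))^2 by rw [sq, ← Real.exp_add, add_halves],
    Real.sqrt_sq (Real.exp_pos _).le]

lemma hc_pos : 0 < (1 - Real.log 2)/2 := by
  have := Real.log_two_lt_d9; norm_num at this ⊢; linarith

lemma expC (s : ℝ) (hs : 0 ≤ s) :
    (2:ℝ)^(s/4) * Real.exp (s/4) * Real.sqrt (1+s)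
      ≤ Real.sqrt (2/(1-Real.log 2)) * Real.exp (s/2) := by
  set c : ℝ := (1 - Real.log 2)/2 with hc
  have hcpos : 0 < c := hc_pos
  have hc1 : c ≤ 1 := by
    have := Real.log_nonneg (by norm_num : (1:ℝ) ≤ 2); rw [hc]; linarith
  have h1 : c * (1+s) ≤ Real.exp (c*s) := by
    nlinarith [Real.add_one_le_exp (c*s)]
  have h2 : Real.sqrt c * Real.sqrt (1+s) ≤ Real.exp (c*s/2) := by
    rw [← Real.sqrt_mul hcpos.le]
    calc Real.sqrt (c*(1+s)) ≤ Real.sqrt (Real.exp (c*s)) := Real.sqrt_le_sqrt h1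
      _ = Real.exp (c*s/2) := sqrt_exp _
  have h3 : Real.sqrt (1+s) ≤ Real.exp (c*s/2) / Real.sqrt c := by
    rw [le_div_iff₀ (Real.sqrt_pos.2 hcpos)]
    nlinarith [h2]
  calc (2:ℝ)^(s/4) * Real.exp (s/4) * Real.sqrt (1+s)
      ≤ (2:ℝ)^(s/4) * Real.exp (s/4) * (Real.exp (c*s/2) / Real.sqrt c) := by
        apply mul_le_mul_of_nonneg_left h3 (by positivity)
    _ = (1/Real.sqrt c) * (Real.exp (Real.log 2 * (s/4)) * Real.exp (s/4) * Real.exp (c*s/2)) := by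
        rw [Real.rpow_def_of_pos (by norm_num : (0:ℝ) < 2)]; ring
    _ = (1/Real.sqrt c) * Real.exp (s/2) := by
        rw [← Real.exp_add, ← Real.exp_add]
        congr 2
        rw [hc]; ring
    _ = Real.sqrt (2/(1-Real.log 2)) * Real.exp (s/2) := by
        rw [one_div, ← Real.sqrt_inv, hc, inv_div]

lemma Gbound (s : ℝ) (hs : 0 ≤ s) :
    ∑' n : ℕ, s^(2*n) / (16^n * (Nat.factorial n : ℝ)^2)
      ≤ (3 + Real.sqrt (2/(1-Real.log 2))) * Real.exp (s/2) * (Real.sqrt (1+s))⁻¹ := by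
  have hs1 : (0:ℝ) < 1 + s := by linarith
  have hsq1 : 0 < Real.sqrt (1+s) := Real.sqrt_pos.2 hs1
  set b : ℕ → ℝ := fun n => 3 * (Real.sqrt (1+s))⁻¹ * ((s/2)^(2*n) / (Nat.factorial (2*n) : ℝ)) with hb
  set c : ℕ → ℝ := fun n => (2:ℝ)^(s/4) * ((s/4)^(2*n) / (Nat.factorial (2*n) : ℝ)) with hcdef
  have hbnn : ∀ n, 0 ≤ b n := fun n => by rw [hb]; positivity
  have hcnn : ∀ n, 0 ≤ c n := fun n => by rw [hcdef]; positivity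
  -- pointwise bound
  have hpt : ∀ n : ℕ, s^(2*n) / (16^n * (Nat.factorial n : ℝ)^2) ≤ b n + c n := by
    intro n
    have hfact : (0:ℝ) < Nat.factorial (2*n) := by exact_mod_cast Nat.factorial_pos _
    have hsqn : (0:ℝ) < Real.sqrt (n+1) := Real.sqrt_pos.2 (by positivity)
    have hd : s^(2*n) / (16^n * (Nat.factorial n : ℝ)^2)
        ≤ ((s/2)^(2*n) / (Nat.factorial (2*n) : ℝ)) * (Real.sqrt (n+1))⁻¹ := by
      have hrw : ((s/2)^(2*n) / (Nat.factorial (2*n) : ℝ)) * (Real.sqrt (n+1))⁻¹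
          = s^(2*n) / (4^n * ((Nat.factorial (2*n) : ℝ) * Real.sqrt (n+1))) := by
        have hp : ((2:ℝ))^(2*n) = 4^n := by rw [pow_mul]; norm_num
        rw [div_pow, hp, ← div_eq_mul_inv, div_div, div_div]
      rw [hrw]
      apply div_le_div_of_nonneg_left (by positivity) (by positivity)
      calc 4^n * ((Nat.factorial (2*n) : ℝ) * Real.sqrt (n+1))
          = 4^n * (Real.sqrt (n+1) * (Nat.factorial (2*n) : ℝ)) := by ring
        _ ≤ 4^n * (4^n * (Nat.factorial n : ℝ)^2) :=
            mul_le_mul_of_nonneg_left (realKey n) (by positivity)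
        _ = 16^n * (Nat.factorial n : ℝ)^2 := by rw [← mul_assoc, ← mul_pow]; norm_num
    by_cases hcase : 1 + s ≤ 9*(n+1)
    · -- large n : bounded by b n
      have h1 : Real.sqrt (1+s) ≤ 3 * Real.sqrt (n+1) := by
        calc Real.sqrt (1+s) ≤ Real.sqrt (9*(n+1)) := Real.sqrt_le_sqrt hcase
          _ = 3 * Real.sqrt (n+1) := by
              rw [show (9:ℝ)*(n+1) = 3^2*(n+1) by norm_num,
                Real.sqrt_mul (by positivity), Real.sqrt_sq (by norm_num)]
      have h2 : (Real.sqrt (n+1))⁻¹ ≤ 3 * (Real.sqrt (1+s))⁻¹ := by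
        rw [inv_eq_one_div, inv_eq_one_div, mul_one_div, div_le_div_iff₀ hsqn hsq1]
        linarith
      have : s^(2*n) / (16^n * (Nat.factorial n : ℝ)^2) ≤ b n := by
        calc s^(2*n) / (16^n * (Nat.factorial n : ℝ)^2)
            ≤ ((s/2)^(2*n) / (Nat.factorial (2*n) : ℝ)) * (Real.sqrt (n+1))⁻¹ := hd
          _ ≤ ((s/2)^(2*n) / (Nat.factorial (2*n) : ℝ)) * (3 * (Real.sqrt (1+s))⁻¹) :=
              mul_le_mul_of_nonneg_left h2 (by positivity)
          _ = b n := by rw [hb]; ring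
      linarith [hcnn n]
    · -- small n : bounded by c n
      push_neg at hcase
      have hn : ((2*n : ℕ) : ℝ) ≤ s/4 := by push_cast; nlinarith
      have h1 : (2:ℝ)^(2*n : ℕ) ≤ (2:ℝ)^(s/4) := by
        rw [← Real.rpow_natCast 2 (2*n)]
        exact Real.rpow_le_rpow_of_exponent_le (by norm_num) hn
      have h2 : (Real.sqrt (n+1))⁻¹ ≤ 1 := by
        have h2' : Real.sqrt 1 ≤ Real.sqrt ((n:ℝ)+1) :=
          Real.sqrt_le_sqrt (by linarith [Nat.cast_nonneg (α := ℝ) n])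
        rw [Real.sqrt_one] at h2'
        rw [inv_le_one_iff₀]
        right
        exact h2'
      have : s^(2*n) / (16^n * (Nat.factorial n : ℝ)^2) ≤ c n := by
        calc s^(2*n) / (16^n * (Nat.factorial n : ℝ)^2)
            ≤ ((s/2)^(2*n) / (Nat.factorial (2*n) : ℝ)) * (Real.sqrt (n+1))⁻¹ := hd
          _ ≤ ((s/2)^(2*n) / (Nat.factorial (2*n) : ℝ)) * 1 :=
              mul_le_mul_of_nonneg_left h2 (by positivity)
          _ = (2:ℝ)^(2*n:ℕ) * ((s/4)^(2*n) / (Nat.factorial (2*n) : ℝ)) := by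
              rw [show s/2 = 2*(s/4) by ring, mul_pow]; ring
          _ ≤ (2:ℝ)^(s/4) * ((s/4)^(2*n) / (Nat.factorial (2*n) : ℝ)) :=
              mul_le_mul_of_nonneg_right h1 (by positivity)
          _ = c n := rfl
      linarith [hbnn n]
  -- summability
  have hSa : Summable (fun n : ℕ => s^(2*n) / (16^n * (Nat.factorial n : ℝ)^2)) :=
    (sumF (s^2) (by positivity)).congr (fun n => by rw [← pow_mul])
  have hSb : Summable b := by
    rw [hb]; exact (sumE (s/2) (by positivity)).mul_left _
  have hSc : Summable c := by
    rw [hcdef]; exact (sumE (s/4) (by positivity)).mul_left _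
  -- assemble
  calc ∑' n : ℕ, s^(2*n) / (16^n * (Nat.factorial n : ℝ)^2)
      ≤ ∑' n : ℕ, (b n + c n) := Summable.tsum_le_tsum hpt hSa (hSb.add hSc)
    _ = (∑' n, b n) + (∑' n, c n) := Summable.tsum_add hSb hSc
    _ ≤ 3 * (Real.sqrt (1+s))⁻¹ * Real.exp (s/2) + (2:ℝ)^(s/4) * Real.exp (s/4) := by
        have hb' : (∑' n, b n) ≤ 3 * (Real.sqrt (1+s))⁻¹ * Real.exp (s/2) := by
          rw [hb, tsum_mul_left]
          exact mul_le_mul_of_nonneg_left (tsumE (s/2) (by positivity)) (by positivity)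
        have hc' : (∑' n, c n) ≤ (2:ℝ)^(s/4) * Real.exp (s/4) := by
          rw [hcdef, tsum_mul_left]
          exact mul_le_mul_of_nonneg_left (tsumE (s/4) (by positivity)) (by positivity)
        linarith
    _ ≤ 3 * (Real.sqrt (1+s))⁻¹ * Real.exp (s/2)
        + Real.sqrt (2/(1-Real.log 2)) * Real.exp (s/2) * (Real.sqrt (1+s))⁻¹ := by
        have h := expC s hs
        have : (2:ℝ)^(s/4) * Real.exp (s/4)
            ≤ Real.sqrt (2/(1-Real.log 2)) * Real.exp (s/2) * (Real.sqrt (1+s))⁻¹ := by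
          rw [← le_div_iff₀ hsq1] at h
          rw [show Real.sqrt (2/(1-Real.log 2)) * Real.exp (s/2) * (Real.sqrt (1+s))⁻¹
            = Real.sqrt (2/(1-Real.log 2)) * Real.exp (s/2) / Real.sqrt (1+s) by ring]
          exact h
        linarith
    _ = (3 + Real.sqrt (2/(1-Real.log 2))) * Real.exp (s/2) * (Real.sqrt (1+s))⁻¹ := by ring

open MeasureTheory Filter

/-- The power series `f(y) = ∑ (−1)^n yⁿ / (16ⁿ (n!)²)`. -/
noncomputable def f (y : ℝ) : ℝ :=
  ∑' n : ℕ, (-1 : ℝ) ^ n * y ^ n / (16 ^ n * (Nat.factorial n : ℝ) ^ 2)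

/-- The isothermal entropy kernel
`χ♯(R,u) = (1/2)·sgn(R)·e^{R/2}·f(u² − R²)` for `|u| < |R|`, and `0` otherwise. -/
noncomputable def chiSharp (R u : ℝ) : ℝ :=
  if |u| < |R| then (1 / 2) * Real.sign R * Real.exp (R / 2) * f (u ^ 2 - R ^ 2) else 0


lemma f_eq (y : ℝ) : f y = ∑' n : ℕ, (-y)^n / (16^n * (Nat.factorial n : ℝ)^2) :=
  tsum_congr fun n => by rw [neg_pow y]

lemma rpow_half_inv (x : ℝ) (hx : 0 ≤ x) :
    (1+x) ^ (-(1/2) : ℝ) = (Real.sqrt (1+x))⁻¹ := by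
  rw [Real.rpow_neg (by linarith), Real.sqrt_eq_rpow]

lemma chiBound (R u : ℝ) :
    |chiSharp R u| ≤ (3 + Real.sqrt (2/(1-Real.log 2))) * Real.exp ((R + |R|)/2)
      * (1 + |R|) ^ (-(1/2) : ℝ) := by
  set K : ℝ := 3 + Real.sqrt (2/(1-Real.log 2)) with hKdef
  have hK : (3:ℝ) ≤ K := by rw [hKdef]; nlinarith [Real.sqrt_nonneg (2/(1-Real.log 2))]
  rw [rpow_half_inv |R| (abs_nonneg R)]
  unfold chiSharp
  split_ifs with h
  · have hu2 : u^2 < R^2 := by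
      rw [← sq_abs u, ← sq_abs R]
      exact pow_lt_pow_left₀ h (abs_nonneg u) (by norm_num)
    have hf_eq : f (u^2 - R^2) = ∑' n : ℕ, (R^2-u^2)^n / (16^n * (Nat.factorial n : ℝ)^2) := by
      rw [f_eq, neg_sub]
    have hfnn : 0 ≤ f (u^2 - R^2) := by
      rw [hf_eq]; exact tsum_nonneg fun n => div_nonneg (pow_nonneg (by nlinarith) n) (by positivity)
    have hmono : f (u^2 - R^2) ≤ ∑' n : ℕ, |R|^(2*n) / (16^n * (Nat.factorial n : ℝ)^2) := by
      rw [hf_eq]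
      apply Summable.tsum_le_tsum ?_ (sumF (R^2-u^2) (by nlinarith)) ?_
      · intro n
        have : (R^2-u^2)^n ≤ |R|^(2*n) := by
          rw [pow_mul, sq_abs]
          exact pow_le_pow_left₀ (by nlinarith) (by nlinarith) n
        apply div_le_div_of_nonneg_right this (by positivity)
      · exact (sumF (|R|^2) (by positivity)).congr (fun n => by rw [← pow_mul])
    have hG := Gbound |R| (abs_nonneg R)
    have hsign : |Real.sign R| = 1 := by
      rcases lt_trichotomy R 0 with h' | h' | h'
      · rw [Real.sign_of_neg h']; norm_num
      · exfalso; rw [h', abs_zero] at h; exact (abs_nonneg u).not_gt h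
      · rw [Real.sign_of_pos h']; norm_num
    calc |1/2 * Real.sign R * Real.exp (R/2) * f (u^2 - R^2)|
        = 1/2 * |Real.sign R| * Real.exp (R/2) * f (u^2 - R^2) := by
          rw [abs_mul, abs_mul, abs_mul, abs_of_nonneg hfnn, Real.abs_exp,
            abs_of_nonneg (by norm_num : (0:ℝ) ≤ 1/2)]
      _ = 1/2 * Real.exp (R/2) * f (u^2 - R^2) := by rw [hsign]; ring
      _ ≤ 1/2 * Real.exp (R/2) * (K * Real.exp (|R|/2) * (Real.sqrt (1+|R|))⁻¹) := by
          apply mul_le_mul_of_nonneg_left (le_trans hmono hG) (by positivity)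
      _ = 1/2 * (K * (Real.exp (R/2) * Real.exp (|R|/2)) * (Real.sqrt (1+|R|))⁻¹) := by ring
      _ = 1/2 * (K * Real.exp ((R+|R|)/2) * (Real.sqrt (1+|R|))⁻¹) := by
          rw [← Real.exp_add]; ring_nf
      _ ≤ K * Real.exp ((R+|R|)/2) * (Real.sqrt (1+|R|))⁻¹ := by
          nlinarith [Real.exp_pos ((R+|R|)/2), Real.sqrt_pos.2 (show (0:ℝ) < 1+|R| by positivity),
            mul_pos (mul_pos (show (0:ℝ) < K by linarith) (Real.exp_pos ((R+|R|)/2)))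
              (inv_pos.2 (Real.sqrt_pos.2 (show (0:ℝ) < 1+|R| by positivity)))]
  · rw [abs_zero]
    have : (0:ℝ) < K := by linarith
    positivity


theorem stmt8 :
    (∃ C > (0 : ℝ), ∀ R u : ℝ,
      |chiSharp R u| ≤ C * Real.exp ((R + |R|) / 2) * (1 + |R|) ^ (-(1 / 2) : ℝ)) ∧
    Tendsto (fun R : ℝ => ⨆ u : ℝ, |chiSharp R u|) atBot (nhds 0) := by
  set K : ℝ := 3 + Real.sqrt (2/(1-Real.log 2)) with hKdef
  have hK : (3:ℝ) ≤ K := by rw [hKdef]; nlinarith [Real.sqrt_nonneg (2/(1-Real.log 2))]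
  have hKpos : (0:ℝ) < K := by linarith
  have hbdd : ∀ R : ℝ, BddAbove (Set.range fun u => |chiSharp R u|) := by
    intro R
    refine ⟨K * Real.exp ((R + |R|)/2) * (1 + |R|) ^ (-(1/2) : ℝ), ?_⟩
    rintro x ⟨u, rfl⟩
    exact chiBound R u
  constructor
  · exact ⟨K, hKpos, chiBound⟩
  · apply tendsto_of_tendsto_of_tendsto_of_le_of_le' (g := fun _ : ℝ => (0:ℝ))
      (h := fun R : ℝ => K * (1 - R) ^ (-(1/2) : ℝ)) tendsto_const_nhds
    · have h1 : Tendsto (fun R : ℝ => 1 - R) atBot atTop := by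
        have := tendsto_neg_atBot_atTop (G := ℝ)
        have h2 := tendsto_atTop_add_const_left atBot (1:ℝ) this
        exact h2.congr (fun R => by ring)
      have h3 : Tendsto (fun R : ℝ => (1 - R) ^ (-(1/2) : ℝ)) atBot (nhds 0) :=
        (tendsto_rpow_neg_atTop (by norm_num : (0:ℝ) < 1/2)).comp h1
      simpa using h3.const_mul K
    · filter_upwards with R
      exact le_trans (abs_nonneg _) (le_ciSup (hbdd R) 0)
    · filter_upwards [eventually_le_atBot (0:ℝ)] with R hR
      apply Real.iSup_le
      · intro u
        calc |chiSharp R u| ≤ K * Real.exp ((R + |R|)/2) * (1 + |R|) ^ (-(1/2) : ℝ) :=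
              chiBound R u
          _ = K * (1 - R) ^ (-(1/2) : ℝ) := by
              rw [abs_of_nonpos hR, show (R + -R)/2 = 0 by ring, Real.exp_zero,
                show (1 + -R) = 1 - R by ring, mul_one]
      · exact mul_nonneg hKpos.le (Real.rpow_nonneg (by linarith) _)
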